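/- arXiv:math/0605066 — 2 statements merged into one kernel-verified Lean document; each statement's English description precedes it below -/
import Mathlib

section
/- (Proposition 'description'.) Let U ⊆ ℂ² be a polydisc centered at 0, W = (ω_1,…,ω_k) a k-web on U, X a transverse infinitesimal automorphism of W, and u_1,…,u_k the canonical first integrals with respect to X. Let λ ∈ ℂ, σ ≥ 1 an integer, and let (α_1,…,α_k) be an abelian relation of W lying in the generalized λ-eigenspace of index σ of L_X, i.e. setting α_i^{(0)} := α_i and α_i^{(m+1)} := L_X α_i^{(m)} − λ·α_i^{(m)}, one has α_i^{(σ)} = 0 for all i. Then there exist polynomials P_1,…,P_k ∈ ℂ[t] of degree < σ such that, on a neighborhood of 0, α_i = (P_i(u_i)·e^{λ·u_i})·du_i for each i; in particular the abelian relation reads P_1(u_1)e^{λu_1}du_1 + ⋯ + P_k(u_k)e^{λu_k}du_k = 0. -/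
open Complex Filter Topology

noncomputable section

/-- A point of the complex plane `ℂ²`. -/
abbrev Pt : Type := ℂ × ℂ

/-- A (holomorphic) 1-form `A dx + B dy` on (an open subset of) `ℂ²`,
identified with the pair of functions `(A, B)`. -/
abbrev Form1 : Type := (Pt → ℂ) × (Pt → ℂ)

/-- The complex partial derivative `∂f/∂x`. -/
noncomputable def pdx (f : Pt → ℂ) (p : Pt) : ℂ := fderiv ℂ f p (1, 0)

/-- The complex partial derivative `∂f/∂y`. -/
noncomputable def pdy (f : Pt → ℂ) (p : Pt) : ℂ := fderiv ℂ f p (0, 1)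

/-- The derivative `X(f) = P ∂f/∂x + Q ∂f/∂y` of `f` along the vector field `X = (P, Q)`. -/
noncomputable def Xf (P Q f : Pt → ℂ) (p : Pt) : ℂ := P p * pdx f p + Q p * pdy f p

/-- The contraction `i_X ω = A·P + B·Q` of the 1-form `ω = (A,B)` with `X = (P,Q)`. -/
noncomputable def contr (P Q : Pt → ℂ) (ω : Form1) (p : Pt) : ℂ := ω.1 p * P p + ω.2 p * Q p

/-- The wedge `ω ∧ ω' = A·B' − B·A'` of two 1-forms, as a function. -/
noncomputable def wedge (ω ω' : Form1) (p : Pt) : ℂ := ω.1 p * ω'.2 p - ω.2 p * ω'.1 p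

/-- The differential `df = (∂f/∂x, ∂f/∂y)` of a function. -/
noncomputable def fd (f : Pt → ℂ) : Form1 := (pdx f, pdy f)

/-- A 1-form `(A,B)` is closed on `U` if `∂A/∂y = ∂B/∂x` on `U`. -/
def IsClosedOn (ω : Form1) (U : Set Pt) : Prop := ∀ p ∈ U, pdy ω.1 p = pdx ω.2 p

/-- The Lie derivative `L_X ω` of the 1-form `ω = (A,B)` with respect to `X = (P,Q)`:
`L_X ω = (X(A) + A ∂P/∂x + B ∂Q/∂x, X(B) + A ∂P/∂y + B ∂Q/∂y)`. -/
noncomputable def lie (P Q : Pt → ℂ) (ω : Form1) : Form1 :=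
  (fun p => Xf P Q ω.1 p + ω.1 p * pdx P p + ω.2 p * pdx Q p,
   fun p => Xf P Q ω.2 p + ω.1 p * pdy P p + ω.2 p * pdy Q p)

/-- A 1-form is holomorphic on `U` if both its components are. -/
def AnalyticForm (ω : Form1) (U : Set Pt) : Prop :=
  AnalyticOnNhd ℂ ω.1 U ∧ AnalyticOnNhd ℂ ω.2 U
/-- A `k`-web on `U`: a `k`-tuple of holomorphic 1-forms, each nonvanishing on `U`,
pairwise transverse at the origin. -/
structure IsWeb {k : ℕ} (ω : Fin k → Form1) (U : Set Pt) : Prop where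
  analytic : ∀ i, AnalyticForm (ω i) U
  nonvanishing : ∀ i, ∀ p ∈ U, ((ω i).1 p, (ω i).2 p) ≠ (0, 0)
  transverse : ∀ i j, i ≠ j → wedge (ω i) (ω j) 0 ≠ 0

/-- An abelian relation `(η_1, …, η_k)` on `V` of the web given by `(ω_1, …, ω_k)`. -/
structure IsAbelianRelOn {k : ℕ} (ω : Fin k → Form1) (η : Fin k → Form1) (V : Set Pt) :
    Prop where
  analytic : ∀ i, AnalyticForm (η i) V
  closed : ∀ i, IsClosedOn (η i) V
  tangent : ∀ i, ∀ p ∈ V, wedge (η i) (ω i) p = 0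
  sum_fst : ∀ p ∈ V, ∑ i, (η i).1 p = 0
  sum_snd : ∀ p ∈ V, ∑ i, (η i).2 p = 0

/-- `U` is a polydisc centered at the origin. -/
def IsPolydisc (U : Set Pt) : Prop :=
  ∃ r s : ℝ, 0 < r ∧ 0 < s ∧ U = Metric.ball (0 : ℂ) r ×ˢ Metric.ball (0 : ℂ) s

/-- `X = (P,Q)` is an infinitesimal automorphism of the web `(ω_1, …, ω_k)` on `U`:
`(L_X ω_i) ∧ ω_i = 0` on `U` for all `i`. -/
def IsInfAut (P Q : Pt → ℂ) {k : ℕ} (ω : Fin k → Form1) (U : Set Pt) : Prop :=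
  ∀ i, ∀ p ∈ U, wedge (lie P Q (ω i)) (ω i) p = 0

/-- `X = (P,Q)` is transverse to the web `(ω_1, …, ω_k)` on `U`:
`i_X ω_i` is nonvanishing on `U` for all `i`. -/
def IsTransverseTo (P Q : Pt → ℂ) {k : ℕ} (ω : Fin k → Form1) (U : Set Pt) : Prop :=
  ∀ i, ∀ p ∈ U, contr P Q (ω i) p ≠ 0

/-- `u` is the canonical first integral of the 1-form `ω` with respect to `X = (P,Q)` on `U`:
`u` is holomorphic, `u(0) = 0` and `du = ω / (i_X ω)`. -/
def IsCanonicalFI (P Q : Pt → ℂ) (ω : Form1) (u : Pt → ℂ) (U : Set Pt) : Prop :=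
  AnalyticOnNhd ℂ u U ∧ u 0 = 0 ∧
    ∀ p ∈ U, pdx u p = ω.1 p / contr P Q ω p ∧ pdy u p = ω.2 p / contr P Q ω p

section Helpers

variable {f g u : Pt → ℂ} {p : Pt} {U : Set Pt}

lemma pdx_congr (hU : IsOpen U) (hp : p ∈ U) (h : ∀ q ∈ U, f q = g q) :
    pdx f p = pdx g p := by
  unfold pdx
  rw [Filter.EventuallyEq.fderiv_eq (Filter.eventuallyEq_of_mem (hU.mem_nhds hp) h)]

lemma pdy_congr (hU : IsOpen U) (hp : p ∈ U) (h : ∀ q ∈ U, f q = g q) :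
    pdy f p = pdy g p := by
  unfold pdy
  rw [Filter.EventuallyEq.fderiv_eq (Filter.eventuallyEq_of_mem (hU.mem_nhds hp) h)]

lemma pdx_const (c : ℂ) : pdx (fun _ => c) p = 0 := by
  unfold pdx; simp

lemma pdy_const (c : ℂ) : pdy (fun _ => c) p = 0 := by
  unfold pdy; simp

lemma pdx_mul (hf : DifferentiableAt ℂ f p) (hg : DifferentiableAt ℂ g p) :
    pdx (fun q => f q * g q) p = f p * pdx g p + pdx f p * g p := by
  unfold pdx; rw [fderiv_fun_mul hf hg]; simp [smul_eq_mul]; ring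

lemma pdy_mul (hf : DifferentiableAt ℂ f p) (hg : DifferentiableAt ℂ g p) :
    pdy (fun q => f q * g q) p = f p * pdy g p + pdy f p * g p := by
  unfold pdy; rw [fderiv_fun_mul hf hg]; simp [smul_eq_mul]; ring

lemma pdx_add (hf : DifferentiableAt ℂ f p) (hg : DifferentiableAt ℂ g p) :
    pdx (fun q => f q + g q) p = pdx f p + pdx g p := by
  unfold pdx; rw [fderiv_fun_add hf hg]; simp

lemma pdy_add (hf : DifferentiableAt ℂ f p) (hg : DifferentiableAt ℂ g p) :
    pdy (fun q => f q + g q) p = pdy f p + pdy g p := by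
  unfold pdy; rw [fderiv_fun_add hf hg]; simp

lemma pdx_sub (hf : DifferentiableAt ℂ f p) (hg : DifferentiableAt ℂ g p) :
    pdx (fun q => f q - g q) p = pdx f p - pdx g p := by
  unfold pdx; rw [fderiv_fun_sub hf hg]; simp

lemma pdy_sub (hf : DifferentiableAt ℂ f p) (hg : DifferentiableAt ℂ g p) :
    pdy (fun q => f q - g q) p = pdy f p - pdy g p := by
  unfold pdy; rw [fderiv_fun_sub hf hg]; simp

lemma pdx_comp {φ : ℂ → ℂ} (hφ : DifferentiableAt ℂ φ (u p)) (hu : DifferentiableAt ℂ u p) :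
    pdx (fun q => φ (u q)) p = deriv φ (u p) * pdx u p := by
  unfold pdx
  rw [show (fun q => φ (u q)) = φ ∘ u from rfl, fderiv_comp p hφ hu]
  simp only [ContinuousLinearMap.coe_comp', Function.comp_apply]
  calc (fderiv ℂ φ (u p)) (fderiv ℂ u p (1, 0))
      = (fderiv ℂ φ (u p)) ((fderiv ℂ u p (1, 0)) • (1 : ℂ)) := by rw [smul_eq_mul, mul_one]
    _ = (fderiv ℂ u p (1, 0)) • (fderiv ℂ φ (u p)) 1 := by rw [map_smul]
    _ = deriv φ (u p) * fderiv ℂ u p (1, 0) := by rw [fderiv_apply_one_eq_deriv, smul_eq_mul, mul_comm]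

lemma pdy_comp {φ : ℂ → ℂ} (hφ : DifferentiableAt ℂ φ (u p)) (hu : DifferentiableAt ℂ u p) :
    pdy (fun q => φ (u q)) p = deriv φ (u p) * pdy u p := by
  unfold pdy
  rw [show (fun q => φ (u q)) = φ ∘ u from rfl, fderiv_comp p hφ hu]
  simp only [ContinuousLinearMap.coe_comp', Function.comp_apply]
  calc (fderiv ℂ φ (u p)) (fderiv ℂ u p (0, 1))
      = (fderiv ℂ φ (u p)) ((fderiv ℂ u p (0, 1)) • (1 : ℂ)) := by rw [smul_eq_mul, mul_one]
    _ = (fderiv ℂ u p (0, 1)) • (fderiv ℂ φ (u p)) 1 := by rw [map_smul]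
    _ = deriv φ (u p) * fderiv ℂ u p (0, 1) := by rw [fderiv_apply_one_eq_deriv, smul_eq_mul, mul_comm]

lemma an_pdx (hf : AnalyticOnNhd ℂ f U) : AnalyticOnNhd ℂ (pdx f) U := by
  intro p hp
  exact ((ContinuousLinearMap.apply ℂ ℂ ((1 : ℂ), (0 : ℂ))).analyticAt _).comp (hf p hp).fderiv

lemma an_pdy (hf : AnalyticOnNhd ℂ f U) : AnalyticOnNhd ℂ (pdy f) U := by
  intro p hp
  exact ((ContinuousLinearMap.apply ℂ ℂ ((0 : ℂ), (1 : ℂ))).analyticAt _).comp (hf p hp).fderiv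

lemma pdy_pdx_eq (hf : AnalyticOnNhd ℂ f U) (hU : IsOpen U) (hp : p ∈ U) :
    pdy (pdx f) p = pdx (pdy f) p := by
  have ha := hf p hp
  have hd : DifferentiableAt ℂ (fderiv ℂ f) p := ha.fderiv.differentiableAt
  have h1 : pdy (pdx f) p = fderiv ℂ (fderiv ℂ f) p (0, 1) (1, 0) := by
    unfold pdy pdx
    rw [show (fun q => fderiv ℂ f q (1, 0)) = (fun q => (fderiv ℂ f q) ((fun _ => ((1 : ℂ), (0 : ℂ))) q)) from rfl,
      fderiv_clm_apply hd (differentiableAt_const _)]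
    simp
  have h2 : pdx (pdy f) p = fderiv ℂ (fderiv ℂ f) p (1, 0) (0, 1) := by
    unfold pdx pdy
    rw [show (fun q => fderiv ℂ f q (0, 1)) = (fun q => (fderiv ℂ f q) ((fun _ => ((0 : ℂ), (1 : ℂ))) q)) from rfl,
      fderiv_clm_apply hd (differentiableAt_const _)]
    simp
  rw [h1, h2]
  exact (ha.contDiffAt (n := 2)).isSymmSndFDerivAt (by simp) _ _

lemma eq_of_pd_zero (hU : IsOpen U) (hc : Convex ℝ U) (hf : ∀ q ∈ U, DifferentiableAt ℂ f q)
    (hx : ∀ q ∈ U, pdx f q = 0) (hy : ∀ q ∈ U, pdy f q = 0) {p q : Pt}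
    (hp : p ∈ U) (hq : q ∈ U) : f p = f q := by
  have hfd : ∀ r ∈ U, fderiv ℂ f r = 0 := by
    intro r hr
    apply ContinuousLinearMap.ext
    intro z
    have hz : z = z.1 • ((1 : ℂ), (0 : ℂ)) + z.2 • ((0 : ℂ), (1 : ℂ)) := by
      simp [Prod.ext_iff]
    rw [hz, map_add, map_smul, map_smul]
    have e1 := hx r hr
    have e2 := hy r hr
    unfold pdx at e1
    unfold pdy at e2
    simp [e1, e2]
  have := Convex.norm_image_sub_le_of_norm_fderiv_le (C := 0) hf
    (fun r hr => by rw [hfd r hr]; simp) hc hq hp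
  rw [zero_mul] at this
  have h0 : f p - f q = 0 := by
    have := norm_le_zero_iff.1 this
    exact this
  exact sub_eq_zero.1 h0

end Helpers

theorem key (U : Set Pt) (hUo : IsOpen U) (hUc : Convex ℝ U) (h0 : (0 : Pt) ∈ U)
    (ω : Form1) (hωnv : ∀ p ∈ U, (ω.1 p, ω.2 p) ≠ ((0 : ℂ), (0 : ℂ)))
    (P Q : Pt → ℂ) (hP : AnalyticOnNhd ℂ P U) (hQ : AnalyticOnNhd ℂ Q U)
    (htr : ∀ p ∈ U, contr P Q ω p ≠ 0)
    (u : Pt → ℂ) (hu : IsCanonicalFI P Q ω u U)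
    (l : ℂ) (σ : ℕ)
    (α : Form1) (hαan : AnalyticForm α U) (hαcl : IsClosedOn α U)
    (hαtan : ∀ p ∈ U, wedge α ω p = 0)
    (T : Form1 → Form1)
    (hT : T = fun η : Form1 => (fun p => (lie P Q η).1 p - l * η.1 p,
                                fun p => (lie P Q η).2 p - l * η.2 p))
    (heig : ∀ p ∈ U, (T^[σ] α).1 p = 0 ∧ (T^[σ] α).2 p = 0) :
    ∃ Po : Polynomial ℂ, Po.degree < (σ : WithBot ℕ) ∧ ∀ p ∈ U,
      α.1 p = Po.eval (u p) * Complex.exp (l * u p) * pdx u p ∧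
      α.2 p = Po.eval (u p) * Complex.exp (l * u p) * pdy u p := by
  obtain ⟨huan, hu0, hud⟩ := hu
  have hT1 : ∀ η (p : Pt), (T η).1 p = (lie P Q η).1 p - l * η.1 p := fun η p => by rw [hT]
  have hT2 : ∀ η (p : Pt), (T η).2 p = (lie P Q η).2 p - l * η.2 p := fun η p => by rw [hT]
  -- differentiability basics
  have hPd : ∀ p ∈ U, DifferentiableAt ℂ P p := fun p hp => (hP p hp).differentiableAt
  have hQd : ∀ p ∈ U, DifferentiableAt ℂ Q p := fun p hp => (hQ p hp).differentiableAt
  have hudiff : ∀ p ∈ U, DifferentiableAt ℂ u p := fun p hp => (huan p hp).differentiableAt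
  have huxan : AnalyticOnNhd ℂ (pdx u) U := an_pdx huan
  have huyan : AnalyticOnNhd ℂ (pdy u) U := an_pdy huan
  have huxd : ∀ p ∈ U, DifferentiableAt ℂ (pdx u) p := fun p hp => (huxan p hp).differentiableAt
  have huyd : ∀ p ∈ U, DifferentiableAt ℂ (pdy u) p := fun p hp => (huyan p hp).differentiableAt
  -- X(u) = 1
  have hXu : ∀ p ∈ U, P p * pdx u p + Q p * pdy u p = 1 := by
    intro p hp
    obtain ⟨h1, h2⟩ := hud p hp
    have hc := htr p hp
    rw [h1, h2]
    field_simp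
    unfold contr
    ring
  -- Schwarz for u
  have hschwU : ∀ p ∈ U, pdy (pdx u) p = pdx (pdy u) p :=
    fun p hp => pdy_pdx_eq huan hUo hp
  -- L_X du = 0 : two scalar identities
  have hLdu1 : ∀ p ∈ U, P p * pdx (pdx u) p + Q p * pdy (pdx u) p
      + pdx u p * pdx P p + pdy u p * pdx Q p = 0 := by
    intro p hp
    have hz : pdx (fun q => P q * pdx u q + Q q * pdy u q) p = 0 := by
      rw [pdx_congr hUo hp (fun q hq => hXu q hq), pdx_const]
    rw [pdx_add (f := fun q => P q * pdx u q) (g := fun q => Q q * pdy u q) ((hPd p hp).mul (huxd p hp)) ((hQd p hp).mul (huyd p hp)),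
       pdx_mul (hPd p hp) (huxd p hp), pdx_mul (hQd p hp) (huyd p hp)] at hz
    have hs := hschwU p hp
    linear_combination hz + Q p * hs
  have hLdu2 : ∀ p ∈ U, P p * pdx (pdy u) p + Q p * pdy (pdy u) p
      + pdx u p * pdy P p + pdy u p * pdy Q p = 0 := by
    intro p hp
    have hz : pdy (fun q => P q * pdx u q + Q q * pdy u q) p = 0 := by
      rw [pdy_congr hUo hp (fun q hq => hXu q hq), pdy_const]
    rw [pdy_add (f := fun q => P q * pdx u q) (g := fun q => Q q * pdy u q) ((hPd p hp).mul (huxd p hp)) ((hQd p hp).mul (huyd p hp)),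
       pdy_mul (hPd p hp) (huxd p hp), pdy_mul (hQd p hp) (huyd p hp)] at hz
    have hs := hschwU p hp
    linear_combination hz - P p * hs
  -- du nonvanishing
  have hne : ∀ p ∈ U, pdx u p ≠ 0 ∨ pdy u p ≠ 0 := by
    intro p hp
    obtain ⟨h1, h2⟩ := hud p hp
    have hnv : ω.1 p ≠ 0 ∨ ω.2 p ≠ 0 := by
      by_contra hcon
      push_neg at hcon
      exact hωnv p hp (by rw [hcon.1, hcon.2])
    have hc := htr p hp
    rcases hnv with h | h
    · left; rw [h1]; exact div_ne_zero h hc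
    · right; rw [h2]; exact div_ne_zero h hc
  -- the tower of coefficient functions
  set g : ℕ → Pt → ℂ := fun m => Nat.rec (fun p => contr P Q α p)
    (fun _ gm => fun p => Xf P Q gm p - l * gm p) m with hgdef
  have hgs : ∀ m p, g (m + 1) p = Xf P Q (g m) p - l * g m p := fun m p => rfl
  -- generic: dg ∧ du = 0 implies pdx g = X(g) ux etc.
  have hgen_x : ∀ (h : Pt → ℂ), (∀ q ∈ U, pdx h q * pdy u q = pdy h q * pdx u q) →
      ∀ p ∈ U, pdx h p = Xf P Q h p * pdx u p := by
    intro h hE2 p hp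
    unfold Xf
    have e2 := hE2 p hp
    have e0 := hXu p hp
    linear_combination (-(pdx h p)) * e0 + Q p * e2
  have hgen_y : ∀ (h : Pt → ℂ), (∀ q ∈ U, pdx h q * pdy u q = pdy h q * pdx u q) →
      ∀ p ∈ U, pdy h p = Xf P Q h p * pdy u p := by
    intro h hE2 p hp
    unfold Xf
    have e2 := hE2 p hp
    have e0 := hXu p hp
    linear_combination (-(pdy h p)) * e0 - P p * e2
  -- the invariant
  have Inv : ∀ m, AnalyticOnNhd ℂ (g m) U ∧
      (∀ p ∈ U, (T^[m] α).1 p = g m p * pdx u p ∧ (T^[m] α).2 p = g m p * pdy u p) ∧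
      (∀ p ∈ U, pdx (g m) p * pdy u p = pdy (g m) p * pdx u p) := by
    intro m
    induction m with
    | zero =>
      have han : AnalyticOnNhd ℂ (g 0) U := by
        show AnalyticOnNhd ℂ (fun p => contr P Q α p) U
        unfold contr
        exact AnalyticOnNhd.add (hαan.1.mul hP) (hαan.2.mul hQ)
      have hE1 : ∀ p ∈ U, α.1 p = g 0 p * pdx u p ∧ α.2 p = g 0 p * pdy u p := by
        intro p hp
        have htan := hαtan p hp
        unfold wedge at htan
        have hc := htr p hp
        obtain ⟨h1, h2⟩ := hud p hp
        have hgv : g 0 p = contr P Q α p := rfl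
        rw [hgv, h1, h2]
        unfold contr at hc ⊢
        constructor
        · rw [mul_div_assoc', eq_div_iff hc]
          linear_combination Q p * htan
        · rw [mul_div_assoc', eq_div_iff hc]
          linear_combination (-(P p)) * htan
      refine ⟨han, fun p hp => by rw [Function.iterate_zero_apply]; exact hE1 p hp, ?_⟩
      intro p hp
      have hgd : DifferentiableAt ℂ (g 0) p := (han p hp).differentiableAt
      have hcl := hαcl p hp
      have ha1 : pdy α.1 p = g 0 p * pdy (pdx u) p + pdy (g 0) p * pdx u p := by
        rw [pdy_congr hUo hp (fun q hq => (hE1 q hq).1), pdy_mul hgd (huxd p hp)]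
      have ha2 : pdx α.2 p = g 0 p * pdx (pdy u) p + pdx (g 0) p * pdy u p := by
        rw [pdx_congr hUo hp (fun q hq => (hE1 q hq).2), pdx_mul hgd (huyd p hp)]
      have hs := hschwU p hp
      linear_combination ha1 - ha2 - hcl + g 0 p * hs
    | succ m ih =>
      obtain ⟨han, hE1, hE2⟩ := ih
      have hgd : ∀ p ∈ U, DifferentiableAt ℂ (g m) p := fun p hp => (han p hp).differentiableAt
      have hgx := hgen_x (g m) hE2
      have hgy := hgen_y (g m) hE2
      have han' : AnalyticOnNhd ℂ (g (m + 1)) U := by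
        show AnalyticOnNhd ℂ (fun p => Xf P Q (g m) p - l * g m p) U
        unfold Xf
        exact AnalyticOnNhd.sub
          (AnalyticOnNhd.add (hP.mul (an_pdx han)) (hQ.mul (an_pdy han)))
          (analyticOnNhd_const.mul han)
      have hA : ∀ p ∈ U, pdx ((T^[m] α).1) p = pdx (g m) p * pdx u p + g m p * pdx (pdx u) p := by
        intro p hp
        rw [pdx_congr hUo hp (fun q hq => (hE1 q hq).1), pdx_mul (hgd p hp) (huxd p hp)]
        ring
      have hAy : ∀ p ∈ U, pdy ((T^[m] α).1) p = pdy (g m) p * pdx u p + g m p * pdy (pdx u) p := by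
        intro p hp
        rw [pdy_congr hUo hp (fun q hq => (hE1 q hq).1), pdy_mul (hgd p hp) (huxd p hp)]
        ring
      have hB : ∀ p ∈ U, pdx ((T^[m] α).2) p = pdx (g m) p * pdy u p + g m p * pdx (pdy u) p := by
        intro p hp
        rw [pdx_congr hUo hp (fun q hq => (hE1 q hq).2), pdx_mul (hgd p hp) (huyd p hp)]
        ring
      have hBy : ∀ p ∈ U, pdy ((T^[m] α).2) p = pdy (g m) p * pdy u p + g m p * pdy (pdy u) p := by
        intro p hp
        rw [pdy_congr hUo hp (fun q hq => (hE1 q hq).2), pdy_mul (hgd p hp) (huyd p hp)]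
        ring
      have hE1' : ∀ p ∈ U, (T^[m+1] α).1 p = g (m+1) p * pdx u p ∧
          (T^[m+1] α).2 p = g (m+1) p * pdy u p := by
        intro p hp
        constructor
        · rw [Function.iterate_succ_apply', hT1]
          simp only [lie, Xf, Prod.fst, Prod.snd]
          rw [hgs m p]
          simp only [Xf]
          rw [hA p hp, hAy p hp, (hE1 p hp).1, (hE1 p hp).2]
          linear_combination (g m p) * hLdu1 p hp
        · rw [Function.iterate_succ_apply', hT2]
          simp only [lie, Xf, Prod.fst, Prod.snd]
          rw [hgs m p]
          simp only [Xf]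
          rw [hB p hp, hBy p hp, (hE1 p hp).1, (hE1 p hp).2]
          linear_combination (g m p) * hLdu2 p hp
      refine ⟨han', hE1', ?_⟩
      -- alternate pointwise formulas
      have halt1 : ∀ p ∈ U, (T^[m+1] α).1 p = pdx (g m) p - l * (g m p * pdx u p) := by
        intro p hp
        rw [(hE1' p hp).1, hgs m p, hgx p hp]
        ring
      have halt2 : ∀ p ∈ U, (T^[m+1] α).2 p = pdy (g m) p - l * (g m p * pdy u p) := by
        intro p hp
        rw [(hE1' p hp).2, hgs m p, hgy p hp]
        ring
      intro p hp
      have hgd' : DifferentiableAt ℂ (g (m + 1)) p := (han' p hp).differentiableAt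
      have hgxan : AnalyticOnNhd ℂ (pdx (g m)) U := an_pdx han
      have hgyan : AnalyticOnNhd ℂ (pdy (g m)) U := an_pdy han
      have c1 : pdy ((T^[m+1] α).1) p
          = pdy (pdx (g m)) p - l * (g m p * pdy (pdx u) p + pdy (g m) p * pdx u p) := by
        rw [pdy_congr hUo hp halt1,
          pdy_sub (g := fun q => l * (g m q * pdx u q)) ((hgxan p hp).differentiableAt)
            ((differentiableAt_const l).mul ((hgd p hp).mul (huxd p hp))),
          pdy_mul (g := fun q => g m q * pdx u q) (differentiableAt_const l) ((hgd p hp).mul (huxd p hp)),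
          pdy_mul (hgd p hp) (huxd p hp), pdy_const]
        ring
      have c2 : pdx ((T^[m+1] α).2) p
          = pdx (pdy (g m)) p - l * (g m p * pdx (pdy u) p + pdx (g m) p * pdy u p) := by
        rw [pdx_congr hUo hp halt2,
          pdx_sub (g := fun q => l * (g m q * pdy u q)) ((hgyan p hp).differentiableAt)
            ((differentiableAt_const l).mul ((hgd p hp).mul (huyd p hp))),
          pdx_mul (g := fun q => g m q * pdy u q) (differentiableAt_const l) ((hgd p hp).mul (huyd p hp)),
          pdx_mul (hgd p hp) (huyd p hp), pdx_const]
        ring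
      have c1' : pdy ((T^[m+1] α).1) p
          = g (m+1) p * pdy (pdx u) p + pdy (g (m+1)) p * pdx u p := by
        rw [pdy_congr hUo hp (fun q hq => (hE1' q hq).1), pdy_mul hgd' (huxd p hp)]
      have c2' : pdx ((T^[m+1] α).2) p
          = g (m+1) p * pdx (pdy u) p + pdx (g (m+1)) p * pdy u p := by
        rw [pdx_congr hUo hp (fun q hq => (hE1' q hq).2), pdx_mul hgd' (huyd p hp)]
      have hschwg : pdy (pdx (g m)) p = pdx (pdy (g m)) p := pdy_pdx_eq han hUo hp
      have hs := hschwU p hp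
      have key1 : g (m+1) p * pdy (pdx u) p + pdy (g (m+1)) p * pdx u p
          = g (m+1) p * pdx (pdy u) p + pdx (g (m+1)) p * pdy u p := by
        rw [← c1', ← c2', c1, c2]
        linear_combination hschwg + l * (hE2 p hp) - l * (g m p) * hs
      linear_combination (-1 : ℂ) * key1 + g (m+1) p * hs
    -- the top coefficient vanishes
  have hgσ : ∀ p ∈ U, g σ p = 0 := by
    intro p hp
    obtain ⟨e1, e2⟩ := heig p hp
    have h1 := ((Inv σ).2.1 p hp).1
    have h2 := ((Inv σ).2.1 p hp).2
    rw [e1] at h1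
    rw [e2] at h2
    rcases hne p hp with h | h
    · exact ((mul_eq_zero.1 h1.symm).resolve_right h)
    · exact ((mul_eq_zero.1 h2.symm).resolve_right h)
  -- the polynomial
  set Po : Polynomial ℂ := ∑ m ∈ Finset.range σ,
    Polynomial.C (g m 0 / (m.factorial : ℂ)) * Polynomial.X ^ m with hPo
  have hdeg : Po.degree < (σ : WithBot ℕ) := by
    apply lt_of_le_of_lt (Polynomial.degree_sum_le _ _)
    refine (Finset.sup_lt_iff (WithBot.bot_lt_coe σ)).2 ?_
    intro m hm
    exact lt_of_le_of_lt (Polynomial.degree_C_mul_X_pow_le m _)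
      (by exact_mod_cast Nat.cast_lt.mpr (Finset.mem_range.1 hm))
  set Qp : ℕ → Polynomial ℂ := fun m => Polynomial.derivative^[m] Po with hQpdef
  have hQs : ∀ m, Qp (m + 1) = Polynomial.derivative (Qp m) :=
    fun m => Function.iterate_succ_apply' _ _ _
  have hQσ : Qp σ = 0 := by
    by_cases hzero : Po = 0
    · show Polynomial.derivative^[σ] Po = 0
      rw [hzero]
      exact Polynomial.iterate_derivative_zero
    · exact Polynomial.iterate_derivative_eq_zero
        ((Polynomial.natDegree_lt_iff_degree_lt hzero).2 hdeg)
  have hQeval0 : ∀ m, m < σ → (Qp m).eval 0 = g m 0 := by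
    intro m hm
    have hsum : Qp m = ∑ j ∈ Finset.range σ,
        Polynomial.C (g j 0 / (j.factorial : ℂ)) *
          (Polynomial.C ((j.descFactorial m : ℕ) : ℂ) * Polynomial.X ^ (j - m)) := by
      show Polynomial.derivative^[m] Po = _
      rw [hPo, Polynomial.iterate_derivative_sum]
      apply Finset.sum_congr rfl
      intro j _
      rw [Polynomial.iterate_derivative_C_mul, Polynomial.iterate_derivative_X_pow_eq_C_mul]
    rw [hsum, Polynomial.eval_finset_sum]
    rw [Finset.sum_eq_single m]
    · simp [Nat.descFactorial_self]
      exact div_mul_cancel₀ _ (by exact_mod_cast m.factorial_ne_zero : ((m.factorial : ℂ)) ≠ 0)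
    · intro j hj hjm
      rcases lt_or_gt_of_ne hjm with h | h
      · simp [Nat.descFactorial_eq_zero_iff_lt.2 h]
      · simp [zero_pow (Nat.sub_ne_zero_of_lt h)]
    · intro hmem
      exact absurd (Finset.mem_range.2 hm) hmem
  -- the comparison functions
  set G : ℕ → Pt → ℂ := fun m p => (Qp m).eval (u p) * Complex.exp (l * u p) with hGdef
  have hφd : ∀ m z, HasDerivAt (fun w => (Qp m).eval w * Complex.exp (l * w))
      ((Qp (m + 1)).eval z * Complex.exp (l * z) + l * ((Qp m).eval z * Complex.exp (l * z))) z := by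
    intro m z
    have h1 : HasDerivAt (fun w => (Qp m).eval w) ((Qp m).derivative.eval z) z :=
      Polynomial.hasDerivAt _ z
    have h2 : HasDerivAt (fun w => Complex.exp (l * w)) (Complex.exp (l * z) * l) z := by
      have := (Complex.hasDerivAt_exp (l * z)).comp z ((hasDerivAt_id z).const_mul l)
      rw [mul_one] at this
      exact this
    have h3 : HasDerivAt (fun w => (Qp m).eval w * Complex.exp (l * w)) _ z := h1.mul h2
    convert h3 using 1
    rw [hQs]
    ring
  have hGd : ∀ m, ∀ p ∈ U, DifferentiableAt ℂ (G m) p := by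
    intro m p hp
    exact ((hφd m (u p)).differentiableAt).comp p (hudiff p hp)
  have hGx : ∀ m, ∀ p ∈ U, pdx (G m) p = (G (m + 1) p + l * G m p) * pdx u p := by
    intro m p hp
    have h := pdx_comp (u := u) (φ := fun w => (Qp m).eval w * Complex.exp (l * w))
      ((hφd m (u p)).differentiableAt) (hudiff p hp)
    rw [(hφd m (u p)).deriv] at h
    exact h
  have hGy : ∀ m, ∀ p ∈ U, pdy (G m) p = (G (m + 1) p + l * G m p) * pdy u p := by
    intro m p hp
    have h := pdy_comp (u := u) (φ := fun w => (Qp m).eval w * Complex.exp (l * w))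
      ((hφd m (u p)).differentiableAt) (hudiff p hp)
    rw [(hφd m (u p)).deriv] at h
    exact h
  -- downward induction
  have down : ∀ d m, m + d = σ → ∀ p ∈ U, g m p = G m p := by
    intro d
    induction d with
    | zero =>
      intro m hm p hp
      rw [Nat.add_zero] at hm
      subst hm
      rw [hgσ p hp]
      show (0 : ℂ) = (Qp m).eval (u p) * Complex.exp (l * u p)
      rw [hQσ]
      simp
    | succ d ih =>
      intro m hm p hp
      have ih1 : ∀ q ∈ U, g (m + 1) q = G (m + 1) q := ih (m + 1) (by omega)
      have hexpd : ∀ q : Pt, q ∈ U → DifferentiableAt ℂ (fun r => Complex.exp (-(l * u r))) q := by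
        intro q hq
        have h2 : DifferentiableAt ℂ (fun w : ℂ => Complex.exp (-(l * w))) (u q) := by
          have := (Complex.hasDerivAt_exp (-(l * u q))).comp (u q)
            (((hasDerivAt_id (u q)).const_mul l).neg)
          exact this.differentiableAt
        exact h2.comp q (hudiff q hq)
      have hexpderiv : ∀ q ∈ U, pdx (fun r => Complex.exp (-(l * u r))) q
          = -l * Complex.exp (-(l * u q)) * pdx u q ∧
          pdy (fun r => Complex.exp (-(l * u r))) q
          = -l * Complex.exp (-(l * u q)) * pdy u q := by
        intro q hq
        have h2 : HasDerivAt (fun w : ℂ => Complex.exp (-(l * w)))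
            (Complex.exp (-(l * u q)) * (-(l * 1))) (u q) :=
          (Complex.hasDerivAt_exp (-(l * u q))).comp (u q)
            (((hasDerivAt_id (u q)).const_mul l).neg)
        constructor
        · have h := pdx_comp (u := u) (φ := fun w : ℂ => Complex.exp (-(l * w)))
            h2.differentiableAt (hudiff q hq)
          rw [h2.deriv] at h
          rw [h]; ring
        · have h := pdy_comp (u := u) (φ := fun w : ℂ => Complex.exp (-(l * w)))
            h2.differentiableAt (hudiff q hq)
          rw [h2.deriv] at h
          rw [h]; ring
      set F : Pt → ℂ := fun q => (g m q - G m q) * Complex.exp (-(l * u q)) with hF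
      have hgmd : ∀ q ∈ U, DifferentiableAt ℂ (g m) q :=
        fun q hq => ((Inv m).1 q hq).differentiableAt
      have hFd : ∀ q ∈ U, DifferentiableAt ℂ F q := by
        intro q hq
        exact ((hgmd q hq).sub (hGd m q hq)).mul (hexpd q hq)
      have hXfg : ∀ q, Xf P Q (g m) q = g (m + 1) q + l * g m q := by
        intro q
        rw [hgs m q]; ring
      have hgx := hgen_x (g m) (Inv m).2.2
      have hgy := hgen_y (g m) (Inv m).2.2
      have hFx : ∀ q ∈ U, pdx F q = 0 := by
        intro q hq
        rw [hF]
        rw [pdx_mul (f := fun q => g m q - G m q) ((hgmd q hq).sub (hGd m q hq)) (hexpd q hq),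
          pdx_sub (hgmd q hq) (hGd m q hq), (hexpderiv q hq).1,
          hgx q hq, hXfg q, hGx m q hq, ih1 q hq]
        ring
      have hFy : ∀ q ∈ U, pdy F q = 0 := by
        intro q hq
        rw [hF]
        rw [pdy_mul (f := fun q => g m q - G m q) ((hgmd q hq).sub (hGd m q hq)) (hexpd q hq),
          pdy_sub (hgmd q hq) (hGd m q hq), (hexpderiv q hq).2,
          hgy q hq, hXfg q, hGy m q hq, ih1 q hq]
        ring
      have hconst : F p = F 0 := eq_of_pd_zero hUo hUc hFd hFx hFy hp h0
      have hG0 : G m 0 = g m 0 := by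
        show (Qp m).eval (u 0) * Complex.exp (l * u 0) = g m 0
        rw [hu0, hQeval0 m (by omega)]
        simp
      have hF0 : F 0 = 0 := by
        rw [hF]
        show (g m 0 - G m 0) * Complex.exp (-(l * u 0)) = 0
        rw [hG0]
        ring
      have hFp : F p = 0 := hconst.trans hF0
      have hFp' : (g m p - G m p) * Complex.exp (-(l * u p)) = 0 := hFp
      rcases mul_eq_zero.1 hFp' with h | h
      · exact sub_eq_zero.1 h
      · exact absurd h (Complex.exp_ne_zero _)
  -- conclusion
  refine ⟨Po, hdeg, ?_⟩
  intro p hp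
  have h00 : g 0 p = G 0 p := down σ 0 (Nat.zero_add σ) p hp
  have hQ0 : Qp 0 = Po := rfl
  have hG0v : G 0 p = Po.eval (u p) * Complex.exp (l * u p) := by
    show (Qp 0).eval (u p) * Complex.exp (l * u p) = _
    rw [hQ0]
  have e1 := ((Inv 0).2.1 p hp).1
  have e2 := ((Inv 0).2.1 p hp).2
  rw [Function.iterate_zero_apply] at e1 e2
  constructor
  · rw [e1, h00, hG0v]
  · rw [e2, h00, hG0v]

/-- **Proposition "description".** Let `W` be a `k`-web on a polydisc `U`,
`X` a transverse infinitesimal automorphism, `u_i` the canonical first integrals. If an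
abelian relation `(α_1,…,α_k)` of `W` lies in the generalized `λ`-eigenspace of index
`σ ≥ 1` of `L_X` (i.e. `(L_X − λ)^σ α_i = 0` for all `i`), then near `0` one has
`α_i = P_i(u_i)·e^{λ u_i}·du_i` for polynomials `P_i` of degree `< σ`; in particular
`∑ P_i(u_i)e^{λ u_i}du_i = 0`. -/
theorem stmt_10 (k : ℕ) (U : Set Pt) (hU : IsPolydisc U) (ω : Fin k → Form1)
    (hweb : IsWeb ω U) (P Q : Pt → ℂ)
    (hP : AnalyticOnNhd ℂ P U) (hQ : AnalyticOnNhd ℂ Q U)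
    (hinf : IsInfAut P Q ω U) (htr : IsTransverseTo P Q ω U)
    (u : Fin k → Pt → ℂ) (hu : ∀ i, IsCanonicalFI P Q (ω i) (u i) U)
    (l : ℂ) (σ : ℕ) (hσ : 1 ≤ σ)
    (α : Fin k → Form1) (hα : IsAbelianRelOn ω α U)
    (T : Form1 → Form1)
    (hT : T = fun η : Form1 => (fun p => (lie P Q η).1 p - l * η.1 p,
                                fun p => (lie P Q η).2 p - l * η.2 p))
    (heig : ∀ i, ∀ p ∈ U, (T^[σ] (α i)).1 p = 0 ∧ (T^[σ] (α i)).2 p = 0) :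
    ∃ Po : Fin k → Polynomial ℂ, (∀ i, (Po i).degree < (σ : WithBot ℕ)) ∧
      ∃ V ∈ 𝓝 (0 : Pt),
        (∀ i, ∀ p ∈ V,
          (α i).1 p = (Po i).eval (u i p) * Complex.exp (l * u i p) * pdx (u i) p ∧
          (α i).2 p = (Po i).eval (u i p) * Complex.exp (l * u i p) * pdy (u i) p) ∧
        (∀ p ∈ V,
          ∑ i, (Po i).eval (u i p) * Complex.exp (l * u i p) * pdx (u i) p = 0 ∧
          ∑ i, (Po i).eval (u i p) * Complex.exp (l * u i p) * pdy (u i) p = 0) := by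
  obtain ⟨r, s, hr, hs, hUeq⟩ := hU
  have hUo : IsOpen U := by
    rw [hUeq]; exact Metric.isOpen_ball.prod Metric.isOpen_ball
  have hUc : Convex ℝ U := by
    rw [hUeq]; exact (convex_ball _ _).prod (convex_ball _ _)
  have h0 : (0 : Pt) ∈ U := by
    rw [hUeq]
    refine ⟨?_, ?_⟩ <;> simp [hr, hs]
  have hkey : ∀ i, ∃ Po : Polynomial ℂ, Po.degree < (σ : WithBot ℕ) ∧ ∀ p ∈ U,
      (α i).1 p = Po.eval (u i p) * Complex.exp (l * u i p) * pdx (u i) p ∧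
      (α i).2 p = Po.eval (u i p) * Complex.exp (l * u i p) * pdy (u i) p :=
    fun i => key U hUo hUc h0 (ω i) (hweb.nonvanishing i) P Q hP hQ (htr i) (u i) (hu i)
      l σ (α i) (hα.analytic i) (hα.closed i) (hα.tangent i) T hT (heig i)
  choose Po hdeg hval using hkey
  refine ⟨Po, hdeg, U, hUo.mem_nhds h0, fun i p hp => hval i p hp, ?_⟩
  intro p hp
  constructor
  · calc ∑ i, (Po i).eval (u i p) * Complex.exp (l * u i p) * pdx (u i) p
        = ∑ i, (α i).1 p := Finset.sum_congr rfl (fun i _ => ((hval i p hp).1).symm)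
      _ = 0 := hα.sum_fst p hp
  · calc ∑ i, (Po i).eval (u i p) * Complex.exp (l * u i p) * pdy (u i) p
        = ∑ i, (α i).2 p := Finset.sum_congr rfl (fun i _ => ((hval i p hp).2).symm)
      _ = 0 := hα.sum_snd p hp
end
end

section
/- Let U ⊆ ℂ² be a polydisc centered at 0, W = (ω_1,…,ω_k) a k-web on U, X a transverse infinitesimal automorphism of W, and u_1,…,u_k the canonical first integrals with respect to X. Let λ ∈ ℂ, λ ≠ 0, and let (α_1,…,α_k) be an abelian relation of W with L_X α_i = λ·α_i for all i. Then there exist constants c_1,…,c_k ∈ ℂ such that, on a neighborhood of 0, α_i = (c_i·e^{λ·u_i})·du_i for each i, and the function c_1·e^{λ·u_1} + ⋯ + c_k·e^{λ·u_k} is constant on that neighborhood. -/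
open Complex Filter Topology

noncomputable section

section Aux

lemma fderiv_apply_mul (f g : Pt → ℂ) (p v : Pt) (hf : DifferentiableAt ℂ f p)
    (hg : DifferentiableAt ℂ g p) :
    fderiv ℂ (fun x => f x * g x) p v = f p * fderiv ℂ g p v + fderiv ℂ f p v * g p := by
  rw [fderiv_fun_mul hf hg]
  simp [smul_eq_mul]
  ring

lemma fderiv_apply_cexp (f : Pt → ℂ) (p v : Pt) (hf : DifferentiableAt ℂ f p) :
    fderiv ℂ (fun x => Complex.exp (f x)) p v = Complex.exp (f p) * fderiv ℂ f p v := by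
  rw [(hf.hasFDerivAt.cexp).fderiv]
  simp [smul_eq_mul]

lemma fderiv_apply_add (f g : Pt → ℂ) (p v : Pt) (hf : DifferentiableAt ℂ f p)
    (hg : DifferentiableAt ℂ g p) :
    fderiv ℂ (fun x => f x + g x) p v = fderiv ℂ f p v + fderiv ℂ g p v := by
  rw [fderiv_fun_add hf hg]; simp

lemma fderiv_apply_const_mul (c : ℂ) (f : Pt → ℂ) (p v : Pt) (hf : DifferentiableAt ℂ f p) :
    fderiv ℂ (fun x => c * f x) p v = c * fderiv ℂ f p v := by
  rw [fderiv_const_mul hf c]; simp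

lemma fderiv_eq_zero_of_pd (f : Pt → ℂ) (p : Pt) (h1 : fderiv ℂ f p (1, 0) = 0)
    (h2 : fderiv ℂ f p (0, 1) = 0) : fderiv ℂ f p = 0 := by
  refine ContinuousLinearMap.ext fun v => ?_
  have hv : v = v.1 • ((1 : ℂ), (0 : ℂ)) + v.2 • ((0 : ℂ), (1 : ℂ)) := by
    simp [Prod.ext_iff]
  rw [ContinuousLinearMap.zero_apply, hv, map_add, map_smul, map_smul, h1, h2]
  simp

end Aux

/-- Let `W` be a `k`-web on a polydisc `U`, `X` a transverse
infinitesimal automorphism, `u_i` the canonical first integrals, and `λ ≠ 0`. If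
`(α_1,…,α_k)` is an abelian relation of `W` with `L_X α_i = λ·α_i` for all `i`, then near
`0` one has `α_i = c_i·e^{λ u_i}·du_i` for constants `c_i`, and `∑ c_i e^{λ u_i}` is
constant near `0`. -/
theorem stmt_11 (k : ℕ) (U : Set Pt) (hU : IsPolydisc U) (ω : Fin k → Form1)
    (hweb : IsWeb ω U) (P Q : Pt → ℂ)
    (hP : AnalyticOnNhd ℂ P U) (hQ : AnalyticOnNhd ℂ Q U)
    (hinf : IsInfAut P Q ω U) (htr : IsTransverseTo P Q ω U)
    (u : Fin k → Pt → ℂ) (hu : ∀ i, IsCanonicalFI P Q (ω i) (u i) U)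
    (l : ℂ) (hl : l ≠ 0)
    (α : Fin k → Form1) (hα : IsAbelianRelOn ω α U)
    (heig : ∀ i, ∀ p ∈ U, (lie P Q (α i)).1 p = l * (α i).1 p ∧
                          (lie P Q (α i)).2 p = l * (α i).2 p) :
    ∃ c : Fin k → ℂ, ∃ V ∈ 𝓝 (0 : Pt),
      (∀ i, ∀ p ∈ V,
        (α i).1 p = c i * Complex.exp (l * u i p) * pdx (u i) p ∧
        (α i).2 p = c i * Complex.exp (l * u i p) * pdy (u i) p) ∧
      (∀ p ∈ V, ∀ q ∈ V,
        ∑ i, c i * Complex.exp (l * u i p) = ∑ i, c i * Complex.exp (l * u i q)) := by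
  obtain ⟨r, s, hr, hs, hUeq⟩ := hU
  have hUopen : IsOpen U := by
    rw [hUeq]; exact Metric.isOpen_ball.prod Metric.isOpen_ball
  have hUconv : Convex ℝ U := by
    rw [hUeq]; exact (convex_ball (0 : ℂ) r).prod (convex_ball (0 : ℂ) s)
  have h0U : (0 : Pt) ∈ U := by
    rw [hUeq]; exact ⟨Metric.mem_ball_self hr, Metric.mem_ball_self hs⟩
  set g : Fin k → Pt → ℂ := fun i p => (α i).1 p * P p + (α i).2 p * Q p with hgdef
  -- Step A : α_i = g_i · du_i on U
  have stepA : ∀ i, ∀ p ∈ U, (α i).1 p = g i p * pdx (u i) p ∧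
      (α i).2 p = g i p * pdy (u i) p := by
    intro i p hp
    have hC := htr i p hp
    obtain ⟨hx, hy⟩ := (hu i).2.2 p hp
    have hw := hα.tangent i p hp
    simp only [wedge] at hw
    simp only [contr] at hC hx hy
    constructor
    · rw [hx, hgdef]
      beta_reduce
      rw [mul_div_assoc', eq_div_iff hC]
      linear_combination Q p * hw
    · rw [hy, hgdef]
      beta_reduce
      rw [mul_div_assoc', eq_div_iff hC]
      linear_combination -(P p) * hw
  -- differentiability
  have hdu : ∀ i, ∀ p ∈ U, DifferentiableAt ℂ (u i) p :=
    fun i p hp => ((hu i).1 p hp).differentiableAt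
  have hda1 : ∀ i, ∀ p ∈ U, DifferentiableAt ℂ (α i).1 p :=
    fun i p hp => ((hα.analytic i).1 p hp).differentiableAt
  have hda2 : ∀ i, ∀ p ∈ U, DifferentiableAt ℂ (α i).2 p :=
    fun i p hp => ((hα.analytic i).2 p hp).differentiableAt
  have hdP : ∀ p ∈ U, DifferentiableAt ℂ P p := fun p hp => (hP p hp).differentiableAt
  have hdQ : ∀ p ∈ U, DifferentiableAt ℂ Q p := fun p hp => (hQ p hp).differentiableAt
  have hdg : ∀ i, ∀ p ∈ U, DifferentiableAt ℂ (g i) p := fun i p hp =>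
    ((hda1 i p hp).mul (hdP p hp)).add ((hda2 i p hp).mul (hdQ p hp))
  -- Step B : dg_i = l·α_i on U
  have stepB : ∀ i, ∀ p ∈ U, fderiv ℂ (g i) p (1, 0) = l * (α i).1 p ∧
      fderiv ℂ (g i) p (0, 1) = l * (α i).2 p := by
    intro i p hp
    have he1 := (heig i p hp).1
    have he2 := (heig i p hp).2
    simp only [lie, Xf] at he1 he2
    have hcl := hα.closed i p hp
    simp only [pdx, pdy] at hcl he1 he2 ⊢
    constructor
    · rw [hgdef]
      beta_reduce
      rw [fderiv_apply_add (fun x => (α i).1 x * P x) (fun x => (α i).2 x * Q x) _ _ ((hda1 i p hp).mul (hdP p hp)) ((hda2 i p hp).mul (hdQ p hp)),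
        fderiv_apply_mul _ _ _ _ (hda1 i p hp) (hdP p hp),
        fderiv_apply_mul _ _ _ _ (hda2 i p hp) (hdQ p hp)]
      linear_combination he1 - Q p * hcl
    · rw [hgdef]
      beta_reduce
      rw [fderiv_apply_add (fun x => (α i).1 x * P x) (fun x => (α i).2 x * Q x) _ _ ((hda1 i p hp).mul (hdP p hp)) ((hda2 i p hp).mul (hdQ p hp)),
        fderiv_apply_mul _ _ _ _ (hda1 i p hp) (hdP p hp),
        fderiv_apply_mul _ _ _ _ (hda2 i p hp) (hdQ p hp)]
      linear_combination he2 + P p * hcl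
  -- Step C : g_i·e^{-l u_i} is constant on U
  have stepC : ∀ i, ∀ p ∈ U, ∀ q ∈ U,
      g i p * Complex.exp (-(l * u i p)) = g i q * Complex.exp (-(l * u i q)) := by
    intro i
    set h : Pt → ℂ := fun p => g i p * Complex.exp (-(l * u i p)) with hhdef
    have hde : ∀ p ∈ U, DifferentiableAt ℂ (fun x => Complex.exp (-(l * u i x))) p :=
      fun p hp => (((hdu i p hp).const_mul l).neg).cexp
    have hdh : ∀ p ∈ U, DifferentiableAt ℂ h p := fun p hp => (hdg i p hp).mul (hde p hp)
    have hder0 : ∀ p ∈ U, fderiv ℂ h p = 0 := by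
      intro p hp
      have hA := (stepA i p hp).1
      have hB := (stepA i p hp).2
      have hdun : DifferentiableAt ℂ (fun x => -(l * u i x)) p := ((hdu i p hp).const_mul l).neg
      have hfe : ∀ v : Pt, fderiv ℂ (fun x => -(l * u i x)) p v = -(l * fderiv ℂ (u i) p v) := by
        intro v
        rw [fderiv_fun_neg, ContinuousLinearMap.neg_apply,
          fderiv_apply_const_mul l (u i) p v (hdu i p hp)]
      apply fderiv_eq_zero_of_pd
      · rw [hhdef, fderiv_apply_mul _ _ _ _ (hdg i p hp) (hde p hp),
          fderiv_apply_cexp _ _ _ hdun, hfe, (stepB i p hp).1]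
        simp only [pdx] at hA
        linear_combination l * Complex.exp (-(l * u i p)) * hA
      · rw [hhdef, fderiv_apply_mul _ _ _ _ (hdg i p hp) (hde p hp),
          fderiv_apply_cexp _ _ _ hdun, hfe, (stepB i p hp).2]
        simp only [pdy] at hB
        linear_combination l * Complex.exp (-(l * u i p)) * hB
    intro p hp q hq
    exact hUconv.is_const_of_fderivWithin_eq_zero
      (fun x hx => (hdh x hx).differentiableWithinAt)
      (fun x hx => by rw [fderivWithin_of_isOpen hUopen hx]; exact hder0 x hx) hp hq
  refine ⟨fun i => g i 0, U, hUopen.mem_nhds h0U, ?_, ?_⟩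
  · -- main identity
    have hmain : ∀ i, ∀ p ∈ U, g i 0 * Complex.exp (l * u i p) = g i p := by
      intro i p hp
      have := stepC i 0 h0U p hp
      rw [(hu i).2.1] at this
      simp only [mul_zero, neg_zero, Complex.exp_zero, mul_one] at this
      rw [this]
      rw [mul_assoc, ← Complex.exp_add]
      simp
    intro i p hp
    refine ⟨?_, ?_⟩
    · rw [(stepA i p hp).1, hmain i p hp]
    · rw [(stepA i p hp).2, hmain i p hp]
  · -- the sum is constant (in fact zero)
    have hzero : ∀ p ∈ U, ∑ i, g i 0 * Complex.exp (l * u i p) = 0 := by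
      intro p hp
      have hmain : ∀ i, g i 0 * Complex.exp (l * u i p) = g i p := by
        intro i
        have := stepC i 0 h0U p hp
        rw [(hu i).2.1] at this
        simp only [mul_zero, neg_zero, Complex.exp_zero, mul_one] at this
        rw [this, mul_assoc, ← Complex.exp_add]
        simp
      calc ∑ i, g i 0 * Complex.exp (l * u i p) = ∑ i, g i p := by
            exact Finset.sum_congr rfl fun i _ => hmain i
        _ = (∑ i, (α i).1 p) * P p + (∑ i, (α i).2 p) * Q p := by
            rw [hgdef]; rw [Finset.sum_add_distrib, Finset.sum_mul, Finset.sum_mul]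
        _ = 0 := by rw [hα.sum_fst p hp, hα.sum_snd p hp]; ring
    intro p hp q hq
    rw [hzero p hp, hzero q hq]
end
end
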